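/- arXiv:1109.3899 — 2 statements merged into one kernel-verified Lean document; each statement's English description precedes it below -/
import Mathlib

section
/- Under the equivalence relation ∼ generated by the five order-preserving facet gluings, all 20 edges of the two pentachora (10 green and 10 red, one for each 2-element subset of {0,1,2,3,4} in each pentachoron) lie in a single equivalence class; i.e., the glued complex has exactly one edge. -/
/-- A face of one of the two pentachora: a colour (`false` = green, `true` = red)
together with a set of vertices (the faces are the pairs whose vertex set is nonempty). -/
abbrev Face : Type := Bool × Finset (Fin 5)

/-- The five order-preserving facet gluings, applied to every nonempty subface of the
source tetrahedron:
green 0124 → red 1234, green 0134 → red 0123, red 0124 → green 0234,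
green 1234 → red 0134, green 0123 → red 0234.
Each vertex map below is the unique order-preserving bijection between the two
4-element vertex sets (entries outside the source set are irrelevant dummies). -/
def glue : Face → Face → Prop := fun x y =>
  (x.1 = false ∧ y.1 = true ∧ x.2.Nonempty ∧ x.2 ⊆ ({0,1,2,4} : Finset (Fin 5)) ∧
    y.2 = x.2.image ![1,2,3,0,4]) ∨
  (x.1 = false ∧ y.1 = true ∧ x.2.Nonempty ∧ x.2 ⊆ ({0,1,3,4} : Finset (Fin 5)) ∧
    y.2 = x.2.image ![0,1,0,2,3]) ∨
  (x.1 = true ∧ y.1 = false ∧ x.2.Nonempty ∧ x.2 ⊆ ({0,1,2,4} : Finset (Fin 5)) ∧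
    y.2 = x.2.image ![0,2,3,0,4]) ∨
  (x.1 = false ∧ y.1 = true ∧ x.2.Nonempty ∧ x.2 ⊆ ({1,2,3,4} : Finset (Fin 5)) ∧
    y.2 = x.2.image ![0,0,1,3,4]) ∨
  (x.1 = false ∧ y.1 = true ∧ x.2.Nonempty ∧ x.2 ⊆ ({0,1,2,3} : Finset (Fin 5)) ∧
    y.2 = x.2.image ![0,2,3,4,0])


lemma e_f01_t12 : glue (false, ({0,1} : Finset (Fin 5))) (true, ({1,2} : Finset (Fin 5))) := by unfold glue; decide
lemma e_f02_t13 : glue (false, ({0,2} : Finset (Fin 5))) (true, ({1,3} : Finset (Fin 5))) := by unfold glue; decide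
lemma e_f04_t14 : glue (false, ({0,4} : Finset (Fin 5))) (true, ({1,4} : Finset (Fin 5))) := by unfold glue; decide
lemma e_f12_t23 : glue (false, ({1,2} : Finset (Fin 5))) (true, ({2,3} : Finset (Fin 5))) := by unfold glue; decide
lemma e_f14_t24 : glue (false, ({1,4} : Finset (Fin 5))) (true, ({2,4} : Finset (Fin 5))) := by unfold glue; decide
lemma e_f24_t34 : glue (false, ({2,4} : Finset (Fin 5))) (true, ({3,4} : Finset (Fin 5))) := by unfold glue; decide
lemma e_f01_t01 : glue (false, ({0,1} : Finset (Fin 5))) (true, ({0,1} : Finset (Fin 5))) := by unfold glue; decide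
lemma e_f03_t02 : glue (false, ({0,3} : Finset (Fin 5))) (true, ({0,2} : Finset (Fin 5))) := by unfold glue; decide
lemma e_f04_t03 : glue (false, ({0,4} : Finset (Fin 5))) (true, ({0,3} : Finset (Fin 5))) := by unfold glue; decide
lemma e_f13_t12 : glue (false, ({1,3} : Finset (Fin 5))) (true, ({1,2} : Finset (Fin 5))) := by unfold glue; decide
lemma e_f14_t13 : glue (false, ({1,4} : Finset (Fin 5))) (true, ({1,3} : Finset (Fin 5))) := by unfold glue; decide
lemma e_f34_t23 : glue (false, ({3,4} : Finset (Fin 5))) (true, ({2,3} : Finset (Fin 5))) := by unfold glue; decide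
lemma e_t01_f02 : glue (true, ({0,1} : Finset (Fin 5))) (false, ({0,2} : Finset (Fin 5))) := by unfold glue; decide
lemma e_t02_f03 : glue (true, ({0,2} : Finset (Fin 5))) (false, ({0,3} : Finset (Fin 5))) := by unfold glue; decide
lemma e_t04_f04 : glue (true, ({0,4} : Finset (Fin 5))) (false, ({0,4} : Finset (Fin 5))) := by unfold glue; decide
lemma e_t12_f23 : glue (true, ({1,2} : Finset (Fin 5))) (false, ({2,3} : Finset (Fin 5))) := by unfold glue; decide
lemma e_t14_f24 : glue (true, ({1,4} : Finset (Fin 5))) (false, ({2,4} : Finset (Fin 5))) := by unfold glue; decide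
lemma e_t24_f34 : glue (true, ({2,4} : Finset (Fin 5))) (false, ({3,4} : Finset (Fin 5))) := by unfold glue; decide
lemma e_f12_t01 : glue (false, ({1,2} : Finset (Fin 5))) (true, ({0,1} : Finset (Fin 5))) := by unfold glue; decide
lemma e_f13_t03 : glue (false, ({1,3} : Finset (Fin 5))) (true, ({0,3} : Finset (Fin 5))) := by unfold glue; decide
lemma e_f14_t04 : glue (false, ({1,4} : Finset (Fin 5))) (true, ({0,4} : Finset (Fin 5))) := by unfold glue; decide
lemma e_f23_t13 : glue (false, ({2,3} : Finset (Fin 5))) (true, ({1,3} : Finset (Fin 5))) := by unfold glue; decide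
lemma e_f24_t14 : glue (false, ({2,4} : Finset (Fin 5))) (true, ({1,4} : Finset (Fin 5))) := by unfold glue; decide
lemma e_f34_t34 : glue (false, ({3,4} : Finset (Fin 5))) (true, ({3,4} : Finset (Fin 5))) := by unfold glue; decide
lemma e_f01_t02 : glue (false, ({0,1} : Finset (Fin 5))) (true, ({0,2} : Finset (Fin 5))) := by unfold glue; decide
lemma e_f02_t03 : glue (false, ({0,2} : Finset (Fin 5))) (true, ({0,3} : Finset (Fin 5))) := by unfold glue; decide
lemma e_f03_t04 : glue (false, ({0,3} : Finset (Fin 5))) (true, ({0,4} : Finset (Fin 5))) := by unfold glue; decide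
lemma e_f13_t24 : glue (false, ({1,3} : Finset (Fin 5))) (true, ({2,4} : Finset (Fin 5))) := by unfold glue; decide
lemma e_f23_t34 : glue (false, ({2,3} : Finset (Fin 5))) (true, ({3,4} : Finset (Fin 5))) := by unfold glue; decide

lemma n_f01 : Relation.EqvGen glue (false, ({0,1} : Finset (Fin 5))) (false, ({0,1} : Finset (Fin 5))) := Relation.EqvGen.refl _
lemma n_t12 : Relation.EqvGen glue (true, ({1,2} : Finset (Fin 5))) (false, ({0,1} : Finset (Fin 5))) := Relation.EqvGen.trans _ _ _ (Relation.EqvGen.symm _ _ (Relation.EqvGen.rel _ _ e_f01_t12)) n_f01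
lemma n_t01 : Relation.EqvGen glue (true, ({0,1} : Finset (Fin 5))) (false, ({0,1} : Finset (Fin 5))) := Relation.EqvGen.trans _ _ _ (Relation.EqvGen.symm _ _ (Relation.EqvGen.rel _ _ e_f01_t01)) n_f01
lemma n_t02 : Relation.EqvGen glue (true, ({0,2} : Finset (Fin 5))) (false, ({0,1} : Finset (Fin 5))) := Relation.EqvGen.trans _ _ _ (Relation.EqvGen.symm _ _ (Relation.EqvGen.rel _ _ e_f01_t02)) n_f01
lemma n_f13 : Relation.EqvGen glue (false, ({1,3} : Finset (Fin 5))) (false, ({0,1} : Finset (Fin 5))) := Relation.EqvGen.trans _ _ _ (Relation.EqvGen.rel _ _ e_f13_t12) n_t12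
lemma n_f23 : Relation.EqvGen glue (false, ({2,3} : Finset (Fin 5))) (false, ({0,1} : Finset (Fin 5))) := Relation.EqvGen.trans _ _ _ (Relation.EqvGen.symm _ _ (Relation.EqvGen.rel _ _ e_t12_f23)) n_t12
lemma n_f02 : Relation.EqvGen glue (false, ({0,2} : Finset (Fin 5))) (false, ({0,1} : Finset (Fin 5))) := Relation.EqvGen.trans _ _ _ (Relation.EqvGen.symm _ _ (Relation.EqvGen.rel _ _ e_t01_f02)) n_t01
lemma n_f12 : Relation.EqvGen glue (false, ({1,2} : Finset (Fin 5))) (false, ({0,1} : Finset (Fin 5))) := Relation.EqvGen.trans _ _ _ (Relation.EqvGen.rel _ _ e_f12_t01) n_t01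
lemma n_f03 : Relation.EqvGen glue (false, ({0,3} : Finset (Fin 5))) (false, ({0,1} : Finset (Fin 5))) := Relation.EqvGen.trans _ _ _ (Relation.EqvGen.rel _ _ e_f03_t02) n_t02
lemma n_t03 : Relation.EqvGen glue (true, ({0,3} : Finset (Fin 5))) (false, ({0,1} : Finset (Fin 5))) := Relation.EqvGen.trans _ _ _ (Relation.EqvGen.symm _ _ (Relation.EqvGen.rel _ _ e_f13_t03)) n_f13
lemma n_t24 : Relation.EqvGen glue (true, ({2,4} : Finset (Fin 5))) (false, ({0,1} : Finset (Fin 5))) := Relation.EqvGen.trans _ _ _ (Relation.EqvGen.symm _ _ (Relation.EqvGen.rel _ _ e_f13_t24)) n_f13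
lemma n_t13 : Relation.EqvGen glue (true, ({1,3} : Finset (Fin 5))) (false, ({0,1} : Finset (Fin 5))) := Relation.EqvGen.trans _ _ _ (Relation.EqvGen.symm _ _ (Relation.EqvGen.rel _ _ e_f23_t13)) n_f23
lemma n_t34 : Relation.EqvGen glue (true, ({3,4} : Finset (Fin 5))) (false, ({0,1} : Finset (Fin 5))) := Relation.EqvGen.trans _ _ _ (Relation.EqvGen.symm _ _ (Relation.EqvGen.rel _ _ e_f23_t34)) n_f23
lemma n_t23 : Relation.EqvGen glue (true, ({2,3} : Finset (Fin 5))) (false, ({0,1} : Finset (Fin 5))) := Relation.EqvGen.trans _ _ _ (Relation.EqvGen.symm _ _ (Relation.EqvGen.rel _ _ e_f12_t23)) n_f12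
lemma n_t04 : Relation.EqvGen glue (true, ({0,4} : Finset (Fin 5))) (false, ({0,1} : Finset (Fin 5))) := Relation.EqvGen.trans _ _ _ (Relation.EqvGen.symm _ _ (Relation.EqvGen.rel _ _ e_f03_t04)) n_f03
lemma n_f04 : Relation.EqvGen glue (false, ({0,4} : Finset (Fin 5))) (false, ({0,1} : Finset (Fin 5))) := Relation.EqvGen.trans _ _ _ (Relation.EqvGen.rel _ _ e_f04_t03) n_t03
lemma n_f14 : Relation.EqvGen glue (false, ({1,4} : Finset (Fin 5))) (false, ({0,1} : Finset (Fin 5))) := Relation.EqvGen.trans _ _ _ (Relation.EqvGen.rel _ _ e_f14_t24) n_t24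
lemma n_f34 : Relation.EqvGen glue (false, ({3,4} : Finset (Fin 5))) (false, ({0,1} : Finset (Fin 5))) := Relation.EqvGen.trans _ _ _ (Relation.EqvGen.symm _ _ (Relation.EqvGen.rel _ _ e_t24_f34)) n_t24
lemma n_f24 : Relation.EqvGen glue (false, ({2,4} : Finset (Fin 5))) (false, ({0,1} : Finset (Fin 5))) := Relation.EqvGen.trans _ _ _ (Relation.EqvGen.rel _ _ e_f24_t34) n_t34
lemma n_t14 : Relation.EqvGen glue (true, ({1,4} : Finset (Fin 5))) (false, ({0,1} : Finset (Fin 5))) := Relation.EqvGen.trans _ _ _ (Relation.EqvGen.symm _ _ (Relation.EqvGen.rel _ _ e_f04_t14)) n_f04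

lemma mem10 : ∀ s : Finset (Fin 5), s.card = 2 → s = {0,1} ∨ s = {0,2} ∨ s = {0,3} ∨ s = {0,4} ∨ s = {1,2} ∨ s = {1,3} ∨ s = {1,4} ∨ s = {2,3} ∨ s = {2,4} ∨ s = {3,4} := by decide

lemma key : ∀ (c : Bool) (s : Finset (Fin 5)), s.card = 2 →
    Relation.EqvGen glue (c, s) (false, ({0,1} : Finset (Fin 5))) := by
  intro c s hs
  rcases mem10 s hs with rfl|rfl|rfl|rfl|rfl|rfl|rfl|rfl|rfl|rfl <;> cases c
  · exact n_f01
  · exact n_t01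
  · exact n_f02
  · exact n_t02
  · exact n_f03
  · exact n_t03
  · exact n_f04
  · exact n_t04
  · exact n_f12
  · exact n_t12
  · exact n_f13
  · exact n_t13
  · exact n_f14
  · exact n_t14
  · exact n_f23
  · exact n_t23
  · exact n_f24
  · exact n_t24
  · exact n_f34
  · exact n_t34

/-- All 20 edges of the two pentachora (one for each 2-element subset of {0,…,4} in each
pentachoron) are identified to a single edge by the equivalence relation generated by
the five facet gluings. -/
theorem all_edges_identified :
    ∀ (c c' : Bool) (s t : Finset (Fin 5)), s.card = 2 → t.card = 2 →
      Relation.EqvGen glue (c, s) (c', t) := by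
  intro c c' s t hs ht
  exact Relation.EqvGen.trans _ _ _ (key c s hs) (Relation.EqvGen.symm _ _ (key c' t ht))
end

section
/- In G, the three elements x₀ = b·a, x₁ = a·b, and x₂ = b⁻¹·a·b² pairwise commute: x₀x₁ = x₁x₀, x₁x₂ = x₂x₁, and x₀x₂ = x₂x₀. -/
/-- The generator `a` of the free group on two generators. -/
def fa : FreeGroup (Fin 2) := FreeGroup.of 0
/-- The generator `b` of the free group on two generators. -/
def fb : FreeGroup (Fin 2) := FreeGroup.of 1

/-- The two relators `(b·a²)·(a³·b²)⁻¹` and `(b²·a)·(a²·b³)⁻¹`. -/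
def csRels : Set (FreeGroup (Fin 2)) :=
  {(fb * fa ^ 2) * (fa ^ 3 * fb ^ 2)⁻¹, (fb ^ 2 * fa) * (fa ^ 2 * fb ^ 3)⁻¹}

/-- The group `G = ⟨a, b ∣ b·a² = a³·b², b²·a = a²·b³⟩`. -/
abbrev G : Type := PresentedGroup csRels

/-- The image of `a` in `G`. -/
def ga : G := PresentedGroup.of 0
/-- The image of `b` in `G`. -/
def gb : G := PresentedGroup.of 1

lemma rel1 : gb * ga ^ 2 = ga ^ 3 * gb ^ 2 := by
  have h : ((fb * fa ^ 2) * (fa ^ 3 * fb ^ 2)⁻¹ : FreeGroup (Fin 2)) ∈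
      Subgroup.normalClosure csRels :=
    Subgroup.subset_normalClosure (Or.inl rfl)
  have h1 : (QuotientGroup.mk ((fb * fa ^ 2) * (fa ^ 3 * fb ^ 2)⁻¹) : G) = 1 :=
    (QuotientGroup.eq_one_iff _).mpr h
  have : (QuotientGroup.mk (fb * fa ^ 2) : G) = QuotientGroup.mk (fa ^ 3 * fb ^ 2) := by
    rw [← mul_inv_eq_one, ← QuotientGroup.mk_inv, ← QuotientGroup.mk_mul]; exact h1
  simpa only [ga, gb, fa, fb, PresentedGroup.of, ← map_pow, ← map_mul] using
    PresentedGroup.mk_eq_mk_of_mul_inv_mem (rels := csRels) (x := fb * fa ^ 2) (y := fa ^ 3 * fb ^ 2) (Or.inl rfl)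

lemma rel2 : gb ^ 2 * ga = ga ^ 2 * gb ^ 3 := by
  have h : ((fb ^ 2 * fa) * (fa ^ 2 * fb ^ 3)⁻¹ : FreeGroup (Fin 2)) ∈
      Subgroup.normalClosure csRels :=
    Subgroup.subset_normalClosure (Or.inr rfl)
  have h1 : (QuotientGroup.mk ((fb ^ 2 * fa) * (fa ^ 2 * fb ^ 3)⁻¹) : G) = 1 :=
    (QuotientGroup.eq_one_iff _).mpr h
  have : (QuotientGroup.mk (fb ^ 2 * fa) : G) = QuotientGroup.mk (fa ^ 2 * fb ^ 3) := by
    rw [← mul_inv_eq_one, ← QuotientGroup.mk_inv, ← QuotientGroup.mk_mul]; exact h1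
  simpa only [ga, gb, fa, fb, PresentedGroup.of, ← map_pow, ← map_mul] using
    PresentedGroup.mk_eq_mk_of_mul_inv_mem (rels := csRels) (x := fb ^ 2 * fa) (y := fa ^ 2 * fb ^ 3) (Or.inr rfl)

/-- In `G`, the elements `x₀ = b·a`, `x₁ = a·b`, `x₂ = b⁻¹·a·b²` pairwise commute. -/
theorem x_pairwise_commute :
    (gb * ga) * (ga * gb) = (ga * gb) * (gb * ga) ∧
    (ga * gb) * (gb⁻¹ * ga * gb ^ 2) = (gb⁻¹ * ga * gb ^ 2) * (ga * gb) ∧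
    (gb * ga) * (gb⁻¹ * ga * gb ^ 2) = (gb⁻¹ * ga * gb ^ 2) * (gb * ga) := by
  refine ⟨?_, ?_, ?_⟩
  · calc (gb * ga) * (ga * gb) = (gb * ga ^ 2) * gb := by simp [pow_succ, mul_assoc]
      _ = (ga ^ 3 * gb ^ 2) * gb := by rw [rel1]
      _ = ga * ((ga ^ 2 * gb ^ 3)) := by simp [pow_succ, mul_assoc]
      _ = ga * (gb ^ 2 * ga) := by rw [rel2]
      _ = (ga * gb) * (gb * ga) := by simp [pow_succ, mul_assoc]
  · calc (ga * gb) * (gb⁻¹ * ga * gb ^ 2) = gb⁻¹ * ((gb * ga ^ 2) * gb ^ 2) := by simp [pow_succ, mul_assoc]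
      _ = gb⁻¹ * ((ga ^ 3 * gb ^ 2) * gb ^ 2) := by rw [rel1]
      _ = gb⁻¹ * (ga * (ga ^ 2 * gb ^ 3) * gb) := by simp [pow_succ, mul_assoc]
      _ = gb⁻¹ * (ga * (gb ^ 2 * ga) * gb) := by rw [rel2]
      _ = (gb⁻¹ * ga * gb ^ 2) * (ga * gb) := by simp [pow_succ, mul_assoc]
  · have key : gb * ((gb * ga) * (gb⁻¹ * ga * gb ^ 2)) =
        gb * ((gb⁻¹ * ga * gb ^ 2) * (gb * ga)) := by
      calc gb * ((gb * ga) * (gb⁻¹ * ga * gb ^ 2))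
          = (gb ^ 2 * ga) * gb⁻¹ * ga * gb ^ 2 := by simp [pow_succ, mul_assoc]
        _ = (ga ^ 2 * gb ^ 3) * gb⁻¹ * ga * gb ^ 2 := by rw [rel2]
        _ = ga ^ 2 * (gb ^ 2 * ga) * gb ^ 2 := by simp [pow_succ, mul_assoc]
        _ = ga ^ 2 * (ga ^ 2 * gb ^ 3) * gb ^ 2 := by rw [rel2]
        _ = ga ^ 4 * gb ^ 5 := by simp [pow_succ, mul_assoc]
        _ = ga * (ga ^ 3 * gb ^ 2) * gb ^ 3 := by simp [pow_succ, mul_assoc]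
        _ = ga * (gb * ga ^ 2) * gb ^ 3 := by rw [rel1]
        _ = ga * gb * (ga ^ 2 * gb ^ 3) := by simp [pow_succ, mul_assoc]
        _ = ga * gb * (gb ^ 2 * ga) := by rw [rel2]
        _ = gb * ((gb⁻¹ * ga * gb ^ 2) * (gb * ga)) := by simp [pow_succ, mul_assoc]
    exact mul_left_cancel key
end
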